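/- For a code of length 16 storing k = 10 data blocks where each coded block has locality 5, the minimum distance is at most 5. -/

import Mathlib

/-- For a code of length 16 storing `k = 10` data blocks where each
coded block has entropy `M/10` and locality 5, the minimum distance is at most 5
(any `16 - d + 1` blocks reconstruct the file of entropy `M`). -/
theorem stmt_5 (M : ℝ) (hM : 0 < M) (d : ℕ) (hd1 : 1 ≤ d) (hdn : d ≤ 16)
    (H : Finset (Fin 16) → ℝ)
    (hH0 : H ∅ = 0)
    (hmono : ∀ S T : Finset (Fin 16), S ⊆ T → H S ≤ H T)
    (hsub : ∀ S T : Finset (Fin 16), H (S ∪ T) + H (S ∩ T) ≤ H S + H T)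
    (hsingle : ∀ i : Fin 16, H {i} = M / 10)
    (hloc : ∀ i : Fin 16, ∃ R : Finset (Fin 16),
      i ∉ R ∧ R.card = 5 ∧ H (insert i R) = H R)
    (hdist : ∀ S : Finset (Fin 16), 16 - d + 1 ≤ S.card → M ≤ H S) :
    d ≤ 5 := by
  by_contra hcon
  push_neg at hcon
  choose R hiR hRcard hRH using hloc
  set m := M / 10 with hm
  have hm0 : 0 < m := by positivity
  have hnonneg : ∀ S : Finset (Fin 16), 0 ≤ H S := by
    intro S
    have := hmono ∅ S (Finset.empty_subset S)
    linarith [hH0]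
  have hunion : ∀ S T : Finset (Fin 16), H (S ∪ T) ≤ H S + H T := by
    intro S T
    have := hsub S T
    have := hnonneg (S ∩ T)
    linarith
  -- subadditive cardinality bound
  have hcard : ∀ T : Finset (Fin 16), H T ≤ T.card * m := by
    intro T
    induction T using Finset.induction_on with
    | empty => simp [hH0]
    | @insert a s hx ih =>
      have h1 := hunion {a} s
      rw [← Finset.insert_eq] at h1
      rw [Finset.card_insert_of_notMem hx]
      push_cast
      rw [hsingle a] at h1
      nlinarith
  -- absorption lemma
  have habs : ∀ (i : Fin 16) (X : Finset (Fin 16)), R i ⊆ X → i ∉ X →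
      H (insert i X) = H X := by
    intro i X hRX hiX
    refine le_antisymm ?_ (hmono _ _ (Finset.subset_insert i X))
    have h := hsub (insert i (R i)) X
    have hu : insert i (R i) ∪ X = insert i X := by
      rw [Finset.insert_union, Finset.union_eq_right.mpr hRX]
    have hi : insert i (R i) ∩ X = R i := by
      ext z
      simp only [Finset.mem_inter, Finset.mem_insert]
      constructor
      · rintro ⟨hz1 | hz2, hzX⟩
        · exact absurd (hz1 ▸ hzX) hiX
        · exact hz2
      · intro hz
        exact ⟨Or.inr hz, hRX hz⟩
    rw [hu, hi, hRH i] at h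
    linarith
  set G : Fin 16 → Finset (Fin 16) := fun i => insert i (R i) with hG
  have hGcard : ∀ i, (G i).card = 6 := by
    intro i
    rw [hG]
    simp only
    rw [Finset.card_insert_of_notMem (hiR i), hRcard i]
  have hGH : ∀ i, H (G i) ≤ 5 * m := by
    intro i
    have h1 : H (G i) = H (R i) := hRH i
    have h2 := hcard (R i)
    rw [hRcard i] at h2
    rw [h1]
    push_cast at h2
    linarith
  -- key: two overlapping groups with one center outside the other group
  have key : ∃ a y, y ∉ G a ∧ (R y ∩ G a).Nonempty := by
    by_cases h : ∃ y, y ∉ G 0 ∧ (R y ∩ G 0).Nonempty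
    · obtain ⟨y, hy1, hy2⟩ := h
      exact ⟨0, y, hy1, hy2⟩
    · push_neg at h
      have hdisj : ∀ y, y ∉ G 0 → ∀ z ∈ G y, z ∉ G 0 := by
        intro y hy z hz hz0
        have hne := h y hy
        rw [hG] at hz
        simp only [Finset.mem_insert] at hz
        rcases hz with rfl | hz
        · exact hy hz0
        · have : z ∈ R y ∩ G 0 := Finset.mem_inter.mpr ⟨hz, hz0⟩
          rw [hne] at this
          exact absurd this (Finset.notMem_empty z)
      have hc : (Finset.univ \ G 0).card = 10 := by
        rw [Finset.card_sdiff_of_subset (Finset.subset_univ _), hGcard]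
        simp
      obtain ⟨x, hx⟩ : (Finset.univ \ G 0).Nonempty := by
        rw [← Finset.card_pos, hc]; norm_num
      have hxG : x ∉ G 0 := (Finset.mem_sdiff.mp hx).2
      have hGx : G x ⊆ Finset.univ \ G 0 := by
        intro z hz
        exact Finset.mem_sdiff.mpr ⟨Finset.mem_univ z, hdisj x hxG z hz⟩
      obtain ⟨y, hy⟩ : ((Finset.univ \ G 0) \ G x).Nonempty := by
        rw [← Finset.card_pos]
        have := Finset.card_sdiff_of_subset hGx
        rw [hc, hGcard] at this
        omega
      have hyGx : y ∉ G x := (Finset.mem_sdiff.mp hy).2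
      have hyG0 : y ∉ G 0 := (Finset.mem_sdiff.mp (Finset.mem_sdiff.mp hy).1).2
      have hGy : G y ⊆ Finset.univ \ G 0 := by
        intro z hz
        exact Finset.mem_sdiff.mpr ⟨Finset.mem_univ z, hdisj y hyG0 z hz⟩
      have hint : (G x ∩ G y).Nonempty := by
        by_contra hne
        rw [Finset.not_nonempty_iff_eq_empty] at hne
        have hd' : Disjoint (G x) (G y) := Finset.disjoint_iff_inter_eq_empty.mpr hne
        have h1 := Finset.card_union_of_disjoint hd'
        have h2 := Finset.card_le_card (Finset.union_subset hGx hGy)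
        rw [h1, hGcard, hGcard, hc] at h2
        omega
      obtain ⟨z, hz⟩ := hint
      have hz1 : z ∈ G x := (Finset.mem_inter.mp hz).1
      have hz2 : z ∈ G y := (Finset.mem_inter.mp hz).2
      have hzy : z ≠ y := fun hzy => hyGx (hzy ▸ hz1)
      have hzRy : z ∈ R y := by
        rw [hG] at hz2
        simp only [Finset.mem_insert] at hz2
        rcases hz2 with rfl | hz2
        · exact absurd rfl hzy
        · exact hz2
      exact ⟨x, y, hyGx, ⟨z, Finset.mem_inter.mpr ⟨hzRy, hz1⟩⟩⟩
  obtain ⟨a, y, hyA, hint⟩ := key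
  set A := G a with hA
  set r := (R y \ A).card with hr
  have hrle : r ≤ 4 := by
    have h1 : (R y \ A).card + (R y ∩ A).card = (R y).card :=
      Finset.card_sdiff_add_card_inter (R y) A
    have h2 : 1 ≤ (R y ∩ A).card := Finset.card_pos.mpr hint
    rw [hRcard y] at h1
    omega
  have hyRA : y ∉ A ∪ R y := by
    rw [Finset.mem_union]
    rintro (h | h)
    · exact hyA h
    · exact hiR y h
  -- entropy of the union of the two groups
  have hHU : H (A ∪ R y) ≤ (5 + r) * m := by
    have heq : A ∪ R y = A ∪ (R y \ A) := (Finset.union_sdiff_self_eq_union).symm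
    have h1 := hunion A (R y \ A)
    have h2 := hcard (R y \ A)
    have h3 := hGH a
    rw [← hr] at h2
    rw [heq]
    linarith
  have habs' : H (insert y (A ∪ R y)) = H (A ∪ R y) :=
    habs y (A ∪ R y) Finset.subset_union_right hyRA
  set U := insert y (A ∪ R y) with hU
  have hcardARy : (A ∪ R y).card = 6 + r := by
    have heq : A ∪ R y = A ∪ (R y \ A) := (Finset.union_sdiff_self_eq_union).symm
    rw [heq, Finset.card_union_of_disjoint Finset.disjoint_sdiff, hGcard]
  have hcardU : U.card = 7 + r := by
    rw [hU, Finset.card_insert_of_notMem hyRA, hcardARy]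
    omega
  -- pad U up to 11 elements
  obtain ⟨S, hUS, hScard⟩ : ∃ S : Finset (Fin 16), U ⊆ S ∧ S.card = 11 := by
    apply Finset.exists_superset_card_eq
    · omega
    · simp
  have hHS : H S ≤ 9 * m := by
    have hSeq : U ∪ (S \ U) = S := Finset.union_sdiff_of_subset hUS
    have h1 := hunion U (S \ U)
    rw [hSeq] at h1
    have h2 := hcard (S \ U)
    have h3 : (S \ U).card = 4 - r := by
      rw [Finset.card_sdiff_of_subset hUS, hScard, hcardU]
      omega
    rw [h3] at h2
    have h4 : ((4 - r : ℕ) : ℝ) = 4 - (r : ℝ) := by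
      have : (r : ℝ) ≤ 4 := by exact_mod_cast hrle
      push_cast [Nat.cast_sub hrle]
      ring
    rw [h4] at h2
    have h5 : H U ≤ (5 + r) * m := by rw [hU, habs']; exact hHU
    nlinarith [hm0]
  have hfinal := hdist S (by omega)
  have : (9 : ℝ) * m < M := by rw [hm]; linarith
  linarith
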